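/- Let A > 0, C > 0, β > 0, and let L = ( −(2C−1) + √((2C−1)² + 8C) )/2. For every ξ₁ with C·A/L < ξ₁ < A·(2C+1)/2, there exists a unique ξ₂ > 0 satisfying the relation C·A/ξ₁ = G( β·ξ₂·(1/A + 1/(2ξ₁)) ), where G = g∘e. -/

import Mathlib

/-- The function e(x) = (2/x²)·eˣ − (1 + 2/x + 2/x²). -/
noncomputable def eFun (x : ℝ) : ℝ :=
  2 / x ^ 2 * Real.exp x - (1 + 2 / x + 2 / x ^ 2)

/-- The function g(x) for a parameter C. -/
noncomputable def gFun (C x : ℝ) : ℝ :=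
  (1 / 2) * (-(2 * C - 1 + x * (2 * C + 1)) +
    Real.sqrt ((2 * C - 1 + x * (2 * C + 1)) ^ 2 + 8 * C * (x + 1)))

/-- The composite G = g ∘ e. -/
noncomputable def GFun (C x : ℝ) : ℝ := gFun C (eFun x)

open Real Set

lemma eFun_ge (x : ℝ) (hx : 0 < x) : x / 3 ≤ eFun x := by
  have hsum := Real.sum_le_exp_of_nonneg hx.le 4
  have hx2 : (0:ℝ) < x ^ 2 := by positivity
  simp [Finset.sum_range_succ] at hsum
  norm_num [Nat.factorial] at hsum
  have h : eFun x - x/3 = 2 * (Real.exp x - (1 + x + x^2/2 + x^3/6)) / x^2 := by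
    rw [eFun]; field_simp; ring
  nlinarith [div_nonneg (by nlinarith : (0:ℝ) ≤ 2 * (Real.exp x - (1 + x + x^2/2 + x^3/6))) hx2.le]

lemma eFun_le (x : ℝ) (hx : 0 < x) (hx1 : x ≤ 1) : eFun x ≤ x := by
  have hb := Real.exp_bound' hx.le hx1 (n := 3) (by norm_num)
  have hx2 : (0:ℝ) < x ^ 2 := by positivity
  simp [Finset.sum_range_succ] at hb
  norm_num [Nat.factorial] at hb
  have h : x - eFun x = (x^3 + x^2 + 2*x + 2 - 2 * Real.exp x) / x^2 := by
    rw [eFun]; field_simp; ring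
  have : (0:ℝ) ≤ (x^3 + x^2 + 2*x + 2 - 2 * Real.exp x) / x^2 := by
    apply div_nonneg _ hx2.le
    nlinarith
  linarith

noncomputable def phiFun (x : ℝ) : ℝ := Real.exp x * (x - 2) + x + 2

lemma phi_pos {x : ℝ} (hx : 0 < x) : 0 < phiFun x := by
  have hmono : StrictMonoOn phiFun (Ici (0:ℝ)) := by
    apply strictMonoOn_of_deriv_pos (convex_Ici 0)
    · unfold phiFun; fun_prop
    · intro y hy
      rw [interior_Ici] at hy
      have hy' : (0:ℝ) < y := hy
      have hd : HasDerivAt phiFun (Real.exp y * (y - 2) + Real.exp y * 1 + 1) y := by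
        unfold phiFun; simpa [phiFun] using
          ((((Real.hasDerivAt_exp y).mul ((hasDerivAt_id y).sub_const 2)).add
            (hasDerivAt_id y)).add_const 2)
      rw [hd.deriv]
      have h1 : -y + 1 < Real.exp (-y) := Real.add_one_lt_exp (by simp; linarith)
      have h2 := Real.exp_pos y
      have h3 : Real.exp (-y) * Real.exp y = 1 := by
        rw [← Real.exp_add]; simp
      nlinarith
  have := hmono (self_mem_Ici) (le_of_lt hx : (0:ℝ) ≤ x) hx
  simpa [phiFun] using this

lemma eFun_hasDeriv {x : ℝ} (hx : 0 < x) :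
    HasDerivAt eFun (2 * phiFun x / x ^ 3) x := by
  have hx0 : x ≠ 0 := ne_of_gt hx
  have hx2 : x ^ 2 ≠ 0 := pow_ne_zero _ hx0
  have h1 : HasDerivAt (fun y : ℝ => y ^ 2) (2 * x) x := by
    simpa using hasDerivAt_pow 2 x
  have h2 : HasDerivAt (fun y : ℝ => (y ^ 2)⁻¹) (-(2 * x) / (x ^ 2) ^ 2) x := h1.inv hx2
  have h3 : HasDerivAt (fun y : ℝ => 2 * (y ^ 2)⁻¹) (2 * (-(2 * x) / (x ^ 2) ^ 2)) x :=
    h2.const_mul 2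
  have h5 : HasDerivAt (fun y : ℝ => 2 * (y ^ 2)⁻¹ * Real.exp y)
      (2 * (-(2 * x) / (x ^ 2) ^ 2) * Real.exp x + 2 * (x ^ 2)⁻¹ * Real.exp x) x :=
    h3.mul (Real.hasDerivAt_exp x)
  have h6 : HasDerivAt (fun y : ℝ => y⁻¹) (-(x ^ 2)⁻¹) x := hasDerivAt_inv hx0
  have h7 : HasDerivAt (fun y : ℝ => 1 + 2 * y⁻¹ + 2 * (y ^ 2)⁻¹)
      (2 * -(x ^ 2)⁻¹ + 2 * (-(2 * x) / (x ^ 2) ^ 2)) x :=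
    ((h6.const_mul 2).const_add 1).add h3
  have hE := h5.sub h7
  have hfe : eFun = fun y : ℝ => 2 * (y ^ 2)⁻¹ * Real.exp y - (1 + 2 * y⁻¹ + 2 * (y ^ 2)⁻¹) := by
    funext y; simp [eFun, div_eq_mul_inv]
  rw [hfe]
  refine hE.congr_deriv ?_
  unfold phiFun; field_simp; ring

lemma eFun_strictMono : StrictMonoOn eFun (Ioi (0:ℝ)) := by
  apply strictMonoOn_of_deriv_pos (convex_Ioi 0)
  · intro y hy
    have hy0 : (y:ℝ) ≠ 0 := ne_of_gt hy
    have : ContinuousAt eFun y := by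
      have : ContinuousAt (fun y : ℝ => 2 / y ^ 2 * Real.exp y - (1 + 2 / y + 2 / y ^ 2)) y := by
        fun_prop (disch := simp [hy0])
      exact this
    exact this.continuousWithinAt
  · intro y hy
    rw [interior_Ioi] at hy
    rw [(eFun_hasDeriv hy).deriv]
    have := phi_pos hy
    have hy' : (0:ℝ) < y := hy
    have hy3 : (0:ℝ) < y ^ 3 := by positivity
    exact div_pos (by linarith) hy3

lemma gFun_eq_iff (C u v : ℝ) (hC : 0 < C) (hu : 0 < u) (hv : 0 < v) :
    gFun C u = v ↔ v ^ 2 + (2 * C - 1 + u * (2 * C + 1)) * v - 2 * C * (u + 1) = 0 := by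
  set b := 2 * C - 1 + u * (2 * C + 1) with hb
  have harg : 0 ≤ b ^ 2 + 8 * C * (u + 1) := by positivity
  have hs2 := Real.sq_sqrt harg
  have hsnn := Real.sqrt_nonneg (b ^ 2 + 8 * C * (u + 1))
  constructor
  · intro h
    rw [gFun] at h
    have hs : Real.sqrt (b ^ 2 + 8 * C * (u + 1)) = 2 * v + b := by linarith
    rw [hs] at hs2
    nlinarith
  · intro h
    have hpos : 0 < 2 * v + b := by nlinarith
    have heq : b ^ 2 + 8 * C * (u + 1) = (2 * v + b) ^ 2 := by nlinarith
    rw [gFun, ← hb, heq, Real.sqrt_sq hpos.le]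
    ring

lemma eFun_continuousOn : ContinuousOn eFun (Ioi (0:ℝ)) := by
  intro y hy
  have hy0 : (y:ℝ) ≠ 0 := ne_of_gt hy
  have : ContinuousAt (fun y : ℝ => 2 / y ^ 2 * Real.exp y - (1 + 2 / y + 2 / y ^ 2)) y := by
    fun_prop (disch := simp [hy0])
  exact ContinuousAt.continuousWithinAt (by exact this)

/-- For every ξ₁ with C·A/L < ξ₁ < A·(2C+1)/2, there exists a unique
ξ₂ > 0 with C·A/ξ₁ = G(β·ξ₂·(1/A + 1/(2ξ₁))), where
L = (−(2C−1) + √((2C−1)² + 8C))/2. -/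
theorem stmt_11 (A C β ξ₁ : ℝ) (hA : 0 < A) (hC : 0 < C) (hβ : 0 < β)
    (h₁ : C * A / ((-(2 * C - 1) + Real.sqrt ((2 * C - 1) ^ 2 + 8 * C)) / 2) < ξ₁)
    (h₂ : ξ₁ < A * (2 * C + 1) / 2) :
    ∃! ξ₂ : ℝ, 0 < ξ₂ ∧ C * A / ξ₁ = GFun C (β * ξ₂ * (1 / A + 1 / (2 * ξ₁))) := by
  have hsq : Real.sqrt ((2 * C - 1) ^ 2 + 8 * C) = 2 * C + 1 := by
    rw [show (2 * C - 1) ^ 2 + 8 * C = (2 * C + 1) ^ 2 by ring,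
      Real.sqrt_sq (by linarith)]
  rw [hsq] at h₁
  have h₁' : C * A < ξ₁ := by
    have : (-(2 * C - 1) + (2 * C + 1)) / 2 = 1 := by ring
    rw [this, div_one] at h₁; exact h₁
  have hξ₁ : 0 < ξ₁ := lt_trans (by positivity) h₁'
  set v : ℝ := C * A / ξ₁ with hvdef
  have hv : 0 < v := by positivity
  have hv1 : v < 1 := (div_lt_one hξ₁).2 h₁'
  have hd : 0 < (2 * C + 1) * v - 2 * C := by
    have hv' : v * ξ₁ = C * A := by rw [hvdef]; field_simp
    have hp : 0 < ((2 * C + 1) * v - 2 * C) * ξ₁ := by nlinarith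
    by_contra hcon
    push_neg at hcon
    nlinarith
  set u : ℝ := (2 * C - (2 * C - 1) * v - v ^ 2) / ((2 * C + 1) * v - 2 * C) with hudef
  have hnum : 0 < 2 * C - (2 * C - 1) * v - v ^ 2 := by nlinarith
  have hu : 0 < u := div_pos hnum hd
  -- the key equivalence: for t > 0, v = GFun C t ↔ eFun t = u
  have key : ∀ t : ℝ, 0 < t → (v = GFun C t ↔ eFun t = u) := by
    intro t ht
    have het : 0 < eFun t := lt_of_lt_of_le (by positivity) (eFun_ge t ht)
    rw [GFun, eq_comm, gFun_eq_iff C (eFun t) v hC het hv]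
    constructor
    · intro h
      rw [hudef]
      rw [eq_div_iff (ne_of_gt hd)]
      nlinarith
    · intro h
      rw [h, hudef]
      field_simp [show v * (2 * C + 1) - 2 * C ≠ 0 by linarith]
      ring
  -- existence of t > 0 with eFun t = u, via IVT
  obtain ⟨t, ht0, htu⟩ : ∃ t : ℝ, 0 < t ∧ eFun t = u := by
    set x₀ : ℝ := min 1 u with hx₀def
    set x₁ : ℝ := max x₀ (3 * u) with hx₁def
    have hx₀pos : 0 < x₀ := lt_min one_pos hu
    have hle : x₀ ≤ x₁ := le_max_left _ _
    have hx₁pos : 0 < x₁ := lt_of_lt_of_le hx₀pos hle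
    have hsub : Icc x₀ x₁ ⊆ Ioi (0:ℝ) := fun y hy => lt_of_lt_of_le hx₀pos hy.1
    have hcont : ContinuousOn eFun (Icc x₀ x₁) := eFun_continuousOn.mono hsub
    have hlow : eFun x₀ ≤ u :=
      le_trans (eFun_le x₀ hx₀pos (min_le_left _ _)) (min_le_right _ _)
    have hhigh : u ≤ eFun x₁ := by
      have := eFun_ge x₁ hx₁pos
      have h3u : 3 * u ≤ x₁ := le_max_right _ _
      linarith
    have hmem : u ∈ Icc (eFun x₀) (eFun x₁) := ⟨hlow, hhigh⟩
    obtain ⟨t, htmem, hts⟩ := intermediate_value_Icc hle hcont hmem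
    exact ⟨t, hsub htmem, hts⟩
  set k : ℝ := 1 / A + 1 / (2 * ξ₁) with hkdef
  have hk : 0 < k := by positivity
  refine ⟨t / (β * k), ⟨by positivity, ?_⟩, ?_⟩
  · have harg : β * (t / (β * k)) * k = t := by field_simp
    rw [harg]
    exact (key t ht0).2 htu
  · rintro ξ₂' ⟨hξ₂'pos, hξ₂'eq⟩
    have ht' : 0 < β * ξ₂' * k := by positivity
    have := ((key _ ht').1 hξ₂'eq)
    have hteq : β * ξ₂' * k = t :=
      eFun_strictMono.injOn (mem_Ioi.2 ht') (mem_Ioi.2 ht0) (this.trans htu.symm)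
    rw [eq_div_iff (by positivity : β * k ≠ 0), ← hteq]
    ring
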